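/- Let 0 < ℓ < m < n and R = k[x^n, x^{n-ℓ} y^ℓ, x^{n-m} y^m, y^n]. Let b_2 be the smallest positive integer such that there exist a_2 with 0 ≤ a_2 < n/gcd(ℓ,n) and c_2 > 0 satisfying b_2 m = a_2 ℓ + c_2 n. Then R is Cohen–Macaulay if and only if b_2 ≥ a_2 + c_2. -/

import Mathlib

open MvPolynomial Pointwise

set_option synthInstance.maxHeartbeats 1000000
set_option maxHeartbeats 2000000


section arith
variable {l m n a2 b2 c2 : ℕ}

private lemma gcd_facts (hl : 0 < l) (hln : l < n) :
    0 < Nat.gcd l n ∧ (n / Nat.gcd l n) * l = (l / Nat.gcd l n) * n ∧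
      0 < n / Nat.gcd l n ∧ l / Nat.gcd l n < n / Nat.gcd l n := by
  have hg : 0 < Nat.gcd l n := Nat.gcd_pos_of_pos_left n hl
  have hgl : Nat.gcd l n ∣ l := Nat.gcd_dvd_left l n
  have hgn : Nat.gcd l n ∣ n := Nat.gcd_dvd_right l n
  refine ⟨hg, ?_, ?_, ?_⟩
  · calc (n / Nat.gcd l n) * l = (n / Nat.gcd l n) * (Nat.gcd l n * (l / Nat.gcd l n)) := by
          rw [Nat.mul_div_cancel' hgl]
      _ = ((n / Nat.gcd l n) * Nat.gcd l n) * (l / Nat.gcd l n) := by ring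
      _ = n * (l / Nat.gcd l n) := by rw [Nat.div_mul_cancel hgn]
      _ = (l / Nat.gcd l n) * n := by ring
  · exact Nat.div_pos (Nat.le_of_dvd (by omega) hgn) hg
  · exact Nat.div_lt_div_of_lt_of_dvd hgn hln

-- reduction: x*l + C*n = (x % n')*l + (C + (x/n')*l')*n
private lemma reduce_mod (hl : 0 < l) (hln : l < n) (x C : ℕ) :
    x * l + C * n = (x % (n / Nat.gcd l n)) * l
      + (C + (x / (n / Nat.gcd l n)) * (l / Nat.gcd l n)) * n := by
  obtain ⟨hg, hkey, hn', hl'⟩ := gcd_facts hl hln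
  set n' := n / Nat.gcd l n
  set l' := l / Nat.gcd l n
  have hx : x = n' * (x / n') + x % n' := (Nat.div_add_mod x n').symm
  calc x * l + C * n = (n' * (x / n') + x % n') * l + C * n := by rw [← hx]
    _ = (x / n') * (n' * l) + (x % n') * l + C * n := by ring
    _ = (x / n') * (l' * n) + (x % n') * l + C * n := by rw [hkey]
    _ = (x % n') * l + (C + (x / n') * l') * n := by ring

end arith

section key
variable {l m n a2 b2 c2 : ℕ}

private lemma keyB (hl : 0 < l) (hlm : l < m) (hmn : m < n)
    (ha2lt : a2 < n / Nat.gcd l n) (hc2pos : 0 < c2)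
    (hrel2 : b2 * m = a2 * l + c2 * n)
    (hmin2 : ∀ b' : ℕ, 0 < b' →
      (∃ a' c' : ℕ, a' < n / Nat.gcd l n ∧ 0 < c' ∧ b' * m = a' * l + c' * n) → b2 ≤ b') :
    ¬ ∃ β γ δ : ℕ, β * l + γ * m + δ * n = a2 * l + (c2 - 1) * n ∧ β + γ + δ + 2 ≤ a2 + c2 := by
  have hln : l < n := lt_trans hlm hmn
  obtain ⟨hg, hkey, hn'pos, hl'lt⟩ := gcd_facts hl hln
  set n' := n / Nat.gcd l n with hn'
  set l' := l / Nat.gcd l n with hl'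
  rintro ⟨β, γ, δ, hE, hw⟩
  obtain ⟨c, rfl⟩ : ∃ c, c2 = c + 1 := ⟨c2 - 1, by omega⟩
  simp only [Nat.add_sub_cancel] at hE
  rcases Nat.eq_zero_or_pos γ with hγ | hγ
  · -- γ = 0
    subst hγ
    simp only [Nat.zero_mul, Nat.add_zero, Nat.zero_add] at hE hw
    rcases lt_trichotomy β a2 with hβ | hβ | hβ
    · -- β < a2 : (a2-β)*l = (δ-c)*n, n' ∣ a2-β ⇒ a2 ≥ n', contra
      have hδ : c < δ := by nlinarith
      have h4 : (a2 - β) * l = (δ - c) * n := by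
        zify [hβ.le, hδ.le]; linarith
      have h5 : (a2 - β) * l' = (δ - c) * n' := by
        apply Nat.eq_of_mul_eq_mul_left hg
        calc Nat.gcd l n * ((a2 - β) * l') = (a2 - β) * (Nat.gcd l n * l') := by ring
          _ = (a2 - β) * l := by rw [Nat.mul_div_cancel' (Nat.gcd_dvd_left l n)]
          _ = (δ - c) * n := h4
          _ = (δ - c) * (Nat.gcd l n * n') := by rw [Nat.mul_div_cancel' (Nat.gcd_dvd_right l n)]
          _ = Nat.gcd l n * ((δ - c) * n') := by ring
      have hcop : Nat.Coprime n' l' := (Nat.coprime_div_gcd_div_gcd hg).symm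
      have hdvd : n' ∣ (a2 - β) := by
        refine hcop.dvd_of_dvd_mul_right ?_
        exact ⟨δ - c, by linarith [h5]⟩
      have : n' ≤ a2 - β := Nat.le_of_dvd (by omega) hdvd
      omega
    · -- β = a2 : δ = c, weight too big
      subst hβ
      have : δ * n = c * n := by omega
      have : δ = c := Nat.eq_of_mul_eq_mul_right (by omega) this
      omega
    · -- β > a2 : (β-a2)*l = (c-δ)*n
      have hδ : δ < c := by nlinarith
      have h4 : (β - a2) * l = (c - δ) * n := by
        zify [hβ.le, hδ.le]; linarith
      have h5 : (β - a2) * l' = (c - δ) * n' := by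
        apply Nat.eq_of_mul_eq_mul_left hg
        calc Nat.gcd l n * ((β - a2) * l') = (β - a2) * (Nat.gcd l n * l') := by ring
          _ = (β - a2) * l := by rw [Nat.mul_div_cancel' (Nat.gcd_dvd_left l n)]
          _ = (c - δ) * n := h4
          _ = (c - δ) * (Nat.gcd l n * n') := by rw [Nat.mul_div_cancel' (Nat.gcd_dvd_right l n)]
          _ = Nat.gcd l n * ((c - δ) * n') := by ring
      -- (c-δ) < (β-a2) since l' < n'
      have h6 : (c - δ) * n' < (β - a2) * n' := by
        calc (c - δ) * n' = (β - a2) * l' := h5.symm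
          _ < (β - a2) * n' := by
              have hpos : 0 < β - a2 := by omega
              exact Nat.mul_lt_mul_of_le_of_lt (le_refl _) hl'lt hpos
      have h7 : c - δ < β - a2 := Nat.lt_of_mul_lt_mul_right h6
      omega
  · -- γ ≥ 1 : impossible outright
    have hγb2 : γ < b2 := by
      have h1 : γ * m < b2 * m := by
        rw [hrel2]; nlinarith
      exact Nat.lt_of_mul_lt_mul_right h1
    have h2 : (b2 - γ) * m = β * l + (δ + 1) * n := by
      zify [hγb2.le]; linarith
    have h3 : (b2 - γ) * m = (β % n') * l + ((δ + 1) + (β / n') * l') * n := by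
      rw [h2]; exact reduce_mod hl hln β (δ + 1)
    have := hmin2 (b2 - γ) (by omega)
      ⟨β % n', (δ + 1) + (β / n') * l', Nat.mod_lt _ hn'pos, by omega, h3⟩
    omega

end key

section keyA
variable {l m n a2 b2 c2 : ℕ}

private lemma keyA (hl : 0 < l) (hlm : l < m) (hmn : m < n)
    (hc2pos : 0 < c2)
    (hrel2 : b2 * m = a2 * l + c2 * n)
    (hmin2 : ∀ b' : ℕ, 0 < b' →
      (∃ a' c' : ℕ, a' < n / Nat.gcd l n ∧ 0 < c' ∧ b' * m = a' * l + c' * n) → b2 ≤ b')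
    (hcm : a2 + c2 ≤ b2)
    (β γ δ β' γ' δ' : ℕ)
    (hE : β * l + γ * m + δ * n + n = β' * l + γ' * m + δ' * n) :
    ∃ B C D : ℕ, B * l + C * m + D * n = β * l + γ * m + δ * n
      ∧ B + C + D + 1 ≤ β' + γ' + δ' := by
  have hln : l < n := lt_trans hlm hmn
  obtain ⟨hg, hkey, hn'pos, hl'lt⟩ := gcd_facts hl hln
  set n' := n / Nat.gcd l n with hn'
  set l' := l / Nat.gcd l n with hl'
  rcases Nat.eq_zero_or_pos δ' with hδ' | hδ'
  · subst hδ'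
    simp only [Nat.zero_mul, Nat.add_zero] at hE
    rcases le_or_gt γ' γ with hγ | hγ
    · -- Case A : γ' ≤ γ, existing rep works
      refine ⟨β, γ, δ, rfl, ?_⟩
      -- show β + γ + δ + 1 ≤ β' + γ'
      by_contra hcon
      push_neg at hcon
      -- β' + γ' ≤ β + γ + δ
      have h1 : (γ - γ') * m + δ * n + n ≤ (β' - β) * l ∨ β' < β := by
        rcases le_or_gt β β' with h | h
        · left; zify [hγ, h] at hE ⊢; linarith
        · right; exact h
      rcases h1 with h1 | h1
      · -- (β'-β) * l ≥ (γ-γ') * m + δ*n + n ≥ ((γ-γ')+δ+1)*(l+1)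
        have h2 : ((γ - γ') + δ + 1) * (l + 1) ≤ (β' - β) * l := by
          calc ((γ - γ') + δ + 1) * (l + 1)
              = (γ - γ') * (l+1) + δ * (l+1) + (l+1) := by ring
            _ ≤ (γ - γ') * m + δ * n + n := by
                have := Nat.mul_le_mul_left (γ - γ') (show l+1 ≤ m by omega)
                have := Nat.mul_le_mul_left δ (show l+1 ≤ n by omega)
                omega
            _ ≤ (β' - β) * l := h1
        -- hence β' - β > (γ-γ') + δ, contradicting hcon
        have h3 : (γ - γ') + δ + 1 ≤ β' - β := by nlinarith
        omega
      · -- β' < β impossible : RHS too small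
        nlinarith
    · -- γ' > γ
      rcases le_or_gt β' β with hβ | hβ
      · -- Case C : reduce and use minimality + relation
        have hΓ : (γ' - γ) * m = (β - β') * l + (δ + 1) * n := by
          zify [hγ.le, hβ]; linarith
        have h3 : (γ' - γ) * m = ((β - β') % n') * l
            + ((δ + 1) + ((β - β') / n') * l') * n := by
          rw [hΓ]; exact reduce_mod hl hln (β - β') (δ + 1)
        have hb2le : b2 ≤ γ' - γ := hmin2 (γ' - γ) (by omega)
          ⟨(β - β') % n', (δ + 1) + ((β - β') / n') * l', Nat.mod_lt _ hn'pos, by omega, h3⟩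
        have hb2γ' : b2 ≤ γ' := by omega
        refine ⟨β' + a2, γ' - b2, c2 - 1, ?_, by omega⟩
        zify [hb2γ', hc2pos] at hE hrel2 ⊢
        linarith
      · -- Case B : γ' > γ, β' > β : existing rep works
        refine ⟨β, γ, δ, rfl, ?_⟩
        -- (δ+1)*n = (β'-β)*l + (γ'-γ)*m ≤ ((β'-β)+(γ'-γ))*(n-1)
        by_contra hcon
        push_neg at hcon
        have h1 : (δ + 1) * n = (β' - β) * l + (γ' - γ) * m := by
          zify [hγ.le, hβ.le]; linarith
        have h2 : (β' - β) * l + (γ' - γ) * m ≤ ((β' - β) + (γ' - γ)) * (n-1) := by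
          have h3 := Nat.mul_le_mul_left (β' - β) (show l ≤ n - 1 by omega)
          have h4 := Nat.mul_le_mul_left (γ' - γ) (show m ≤ n - 1 by omega)
          calc (β' - β) * l + (γ' - γ) * m ≤ (β' - β) * (n-1) + (γ' - γ) * (n-1) := by omega
            _ = ((β' - β) + (γ' - γ)) * (n-1) := by ring
        have h5 : δ + 1 < (β' - β) + (γ' - γ) := by nlinarith
        omega
  · -- δ' ≥ 1
    refine ⟨β', γ', δ' - 1, ?_, by omega⟩
    zify [hδ'] at hE ⊢
    linarith

end keyA

noncomputable def mexp (a b : ℕ) : Fin 2 →₀ ℕ := Finsupp.single 0 a + Finsupp.single 1 b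

lemma mexp_apply0 (a b : ℕ) : mexp a b 0 = a := by
  simp [mexp, Finsupp.single_apply]

lemma mexp_apply1 (a b : ℕ) : mexp a b 1 = b := by
  simp [mexp, Finsupp.single_apply]

lemma mexp_eq_self (d : Fin 2 →₀ ℕ) : mexp (d 0) (d 1) = d := by
  ext i
  fin_cases i
  · exact mexp_apply0 _ _
  · exact mexp_apply1 _ _

lemma mexp_add (a b c d : ℕ) : mexp a b + mexp c d = mexp (a + c) (b + d) := by
  ext i
  fin_cases i
  · simp [mexp_apply0]
  · simp [mexp_apply1]

lemma mexp_smul (t a b : ℕ) : t • mexp a b = mexp (t * a) (t * b) := by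
  ext i
  fin_cases i
  · simp [mexp_apply0]
  · simp [mexp_apply1]

lemma mexp_inj {a b c d : ℕ} (h : mexp a b = mexp c d) : a = c ∧ b = d := by
  constructor
  · have := congrArg (fun f => f (0 : Fin 2)) h; simpa [mexp_apply0] using this
  · have := congrArg (fun f => f (1 : Fin 2)) h; simpa [mexp_apply1] using this

lemma mexp_single0 (a : ℕ) : mexp a 0 = Finsupp.single 0 a := by
  simp [mexp]

lemma mexp_single1 (b : ℕ) : mexp 0 b = Finsupp.single 1 b := by
  simp [mexp]

section S
variable (l m n : ℕ)

noncomputable def SS : AddSubmonoid (Fin 2 →₀ ℕ) :=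
  AddSubmonoid.closure {mexp n 0, mexp (n-l) l, mexp (n-m) m, mexp 0 n}

variable {l m n}

lemma mem_SS_iff {d : Fin 2 →₀ ℕ} :
    d ∈ SS l m n ↔ ∃ α β γ δ : ℕ,
      d = α • mexp n 0 + β • mexp (n-l) l + γ • mexp (n-m) m + δ • mexp 0 n := by
  constructor
  · intro hd
    induction hd using AddSubmonoid.closure_induction with
    | mem x hx =>
      simp only [Set.mem_insert_iff, Set.mem_singleton_iff] at hx
      rcases hx with h | h | h | h
      · exact ⟨1, 0, 0, 0, by simp [h]⟩
      · exact ⟨0, 1, 0, 0, by simp [h]⟩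
      · exact ⟨0, 0, 1, 0, by simp [h]⟩
      · exact ⟨0, 0, 0, 1, by simp [h]⟩
    | zero => exact ⟨0, 0, 0, 0, by simp⟩
    | add x y hx hy ihx ihy =>
      obtain ⟨α, β, γ, δ, rfl⟩ := ihx
      obtain ⟨α', β', γ', δ', rfl⟩ := ihy
      exact ⟨α + α', β + β', γ + γ', δ + δ', by module⟩
  · rintro ⟨α, β, γ, δ, rfl⟩
    have h0 : mexp n 0 ∈ SS l m n := AddSubmonoid.subset_closure (by simp)
    have h1 : mexp (n-l) l ∈ SS l m n := AddSubmonoid.subset_closure (by simp)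
    have h2 : mexp (n-m) m ∈ SS l m n := AddSubmonoid.subset_closure (by simp)
    have h3 : mexp 0 n ∈ SS l m n := AddSubmonoid.subset_closure (by simp)
    exact add_mem (add_mem (add_mem (AddSubmonoid.nsmul_mem _ h0 α)
      (AddSubmonoid.nsmul_mem _ h1 β)) (AddSubmonoid.nsmul_mem _ h2 γ))
      (AddSubmonoid.nsmul_mem _ h3 δ)

lemma mem_SS_coord (hl : 0 < l) (hlm : l < m) (hmn : m < n) {x y : ℕ} :
    mexp x y ∈ SS l m n ↔
      n ∣ (x + y) ∧ ∃ β γ δ : ℕ, y = β * l + γ * m + δ * n ∧ β + γ + δ ≤ (x + y) / n := by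
  constructor
  · intro h
    rw [mem_SS_iff] at h
    obtain ⟨α, β, γ, δ, hd⟩ := h
    simp only [mexp_smul, mexp_add, Nat.mul_zero, Nat.zero_add, Nat.add_zero] at hd
    obtain ⟨hx, hy⟩ := mexp_inj hd
    have hxy : x + y = (α + β + γ + δ) * n := by
      have h1 : β * (n - l) + β * l = β * n := by
        rw [← Nat.mul_add]; congr 1; omega
      have h2 : γ * (n - m) + γ * m = γ * n := by
        rw [← Nat.mul_add]; congr 1; omega
      calc x + y = (α * n + β * (n-l) + γ * (n-m)) + (β * l + γ * m + δ * n) := by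
            rw [hx, hy]
        _ = α * n + (β * (n-l) + β * l) + (γ * (n-m) + γ * m) + δ * n := by ring
        _ = α * n + β * n + γ * n + δ * n := by rw [h1, h2]
        _ = (α + β + γ + δ) * n := by ring
    refine ⟨⟨α + β + γ + δ, by rw [hxy, Nat.mul_comm]⟩, β, γ, δ, hy, ?_⟩
    rw [hxy, Nat.mul_div_cancel _ (by omega : 0 < n)]
    omega
  · rintro ⟨⟨T, hT⟩, β, γ, δ, hy, hw⟩
    rw [hT, Nat.mul_comm, Nat.mul_div_cancel _ (by omega : 0 < n)] at hw
    rw [mem_SS_iff]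
    refine ⟨T - (β + γ + δ), β, γ, δ, ?_⟩
    simp only [mexp_smul, mexp_add, Nat.mul_zero, Nat.zero_add, Nat.add_zero]
    have hx : x = (T - (β + γ + δ)) * n + β * (n - l) + γ * (n - m) := by
      zify [show l ≤ n by omega, show m ≤ n by omega, hw]
      zify at hT hy
      linarith
    rw [← hy, ← hx]

lemma mem_shift_coord (hl : 0 < l) (hlm : l < m) (hmn : m < n) {x y : ℕ} :
    (∃ s ∈ SS l m n, mexp x y = mexp n 0 + s) ↔
      n ∣ (x + y) ∧ ∃ β γ δ : ℕ, y = β * l + γ * m + δ * n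
        ∧ β + γ + δ + 1 ≤ (x + y) / n := by
  constructor
  · rintro ⟨s, hs, he⟩
    rw [← mexp_eq_self s, mexp_add] at he
    obtain ⟨hx, hy⟩ := mexp_inj he
    rw [← mexp_eq_self s, mem_SS_coord hl hlm hmn] at hs
    obtain ⟨⟨T, hT⟩, β, γ, δ, hrep, hw⟩ := hs
    rw [hT, Nat.mul_comm, Nat.mul_div_cancel _ (by omega : 0 < n)] at hw
    have hxy : x + y = n * (T + 1) := by
      have h1 : x + y = n + n * T := by omega
      rw [h1]; ring
    refine ⟨⟨T + 1, hxy⟩, β, γ, δ, by omega, ?_⟩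
    rw [hxy, Nat.mul_div_cancel_left _ (by omega : 0 < n)]
    omega
  · rintro ⟨⟨T, hT⟩, β, γ, δ, hrep, hw⟩
    rw [hT, Nat.mul_div_cancel_left _ (by omega : 0 < n)] at hw
    have hxn : n ≤ x := by
      zify at hT hrep ⊢
      have h1 : (0:ℤ) ≤ (β:ℤ) * ((n:ℤ) - (l:ℤ)) := by
        apply mul_nonneg (Int.natCast_nonneg β)
        have : (l:ℤ) ≤ n := by exact_mod_cast (by omega : l ≤ n)
        linarith
      have h2 : (0:ℤ) ≤ (γ:ℤ) * ((n:ℤ) - (m:ℤ)) := by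
        apply mul_nonneg (Int.natCast_nonneg γ)
        have : (m:ℤ) ≤ n := by exact_mod_cast hmn.le
        linarith
      have h3 : (1:ℤ) ≤ T := by exact_mod_cast (by omega : 1 ≤ T)
      nlinarith [hT, hrep]
    refine ⟨mexp (x - n) y, ?_, ?_⟩
    · rw [mem_SS_coord hl hlm hmn]
      have hd : (x - n) + y = n * (T - 1) := by
        have : 1 ≤ T := by omega
        zify [hxn, this] at hT ⊢
        linarith
      refine ⟨⟨T - 1, hd⟩, β, γ, δ, hrep, ?_⟩
      rw [hd, Nat.mul_div_cancel_left _ (by omega : 0 < n)]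
      omega
    · rw [mexp_add]
      congr 1 <;> omega
section ring
variable {k : Type*} [Field k] (l m n : ℕ)

lemma gen0 : (X 0 ^ n : MvPolynomial (Fin 2) k) = monomial (mexp n 0) 1 := by
  rw [X_pow_eq_monomial, mexp_single0]

lemma gen3 : (X 1 ^ n : MvPolynomial (Fin 2) k) = monomial (mexp 0 n) 1 := by
  rw [X_pow_eq_monomial, mexp_single1]

lemma gen12 (a b : ℕ) :
    (X 0 ^ a * X 1 ^ b : MvPolynomial (Fin 2) k) = monomial (mexp a b) 1 := by
  rw [X_pow_eq_monomial, X_pow_eq_monomial, monomial_mul, one_mul, mexp]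

variable {l m n}

lemma monomial_mem_R {d : Fin 2 →₀ ℕ} (hd : d ∈ SS l m n) :
    (monomial d 1 : MvPolynomial (Fin 2) k) ∈
      Algebra.adjoin k ({X 0 ^ n, X 0 ^ (n - l) * X 1 ^ l, X 0 ^ (n - m) * X 1 ^ m, X 1 ^ n} :
        Set (MvPolynomial (Fin 2) k)) := by
  induction hd using AddSubmonoid.closure_induction with
  | mem x hx =>
    simp only [Set.mem_insert_iff, Set.mem_singleton_iff] at hx
    rcases hx with h | h | h | h <;> subst h
    · exact Algebra.subset_adjoin (by rw [← gen0]; simp)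
    · exact Algebra.subset_adjoin (by rw [← gen12]; simp)
    · exact Algebra.subset_adjoin (by rw [← gen12]; simp)
    · exact Algebra.subset_adjoin (by rw [← gen3]; simp)
  | zero =>
    rw [monomial_zero']
    simpa using (Algebra.adjoin k _).one_mem
  | add x y hx hy ihx ihy =>
    have : (monomial (x + y) (1:k)) = monomial x 1 * monomial y 1 := by
      rw [monomial_mul, one_mul]
    rw [this]
    exact mul_mem ihx ihy

lemma mem_R_iff (hl : 0 < l) (hlm : l < m) (hmn : m < n) (f : MvPolynomial (Fin 2) k) :
    f ∈ Algebra.adjoin k ({X 0 ^ n, X 0 ^ (n - l) * X 1 ^ l, X 0 ^ (n - m) * X 1 ^ m, X 1 ^ n} :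
        Set (MvPolynomial (Fin 2) k)) ↔ ∀ d ∈ f.support, d ∈ SS l m n := by
  classical
  constructor
  · intro hf
    induction hf using Algebra.adjoin_induction with
    | mem x hx =>
      simp only [Set.mem_insert_iff, Set.mem_singleton_iff] at hx
      intro d hd
      rcases hx with h | h | h | h <;> subst h <;>
        [rw [gen0] at hd; rw [gen12] at hd; rw [gen12] at hd; rw [gen3] at hd] <;>
      · rw [support_monomial, if_neg (one_ne_zero)] at hd
        simp only [Finset.mem_singleton] at hd
        subst hd
        exact AddSubmonoid.subset_closure (by simp)
    | algebraMap r =>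
      intro d hd
      rw [show (algebraMap k (MvPolynomial (Fin 2) k)) r = C r from rfl,
        C_apply, support_monomial] at hd
      split_ifs at hd with h
      · simp at hd
      · simp only [Finset.mem_singleton] at hd
        subst hd
        exact zero_mem _
    | add x y hx hy ihx ihy =>
      intro d hd
      rcases Finset.mem_union.mp (MvPolynomial.support_add hd) with h | h
      · exact ihx d h
      · exact ihy d h
    | mul x y hx hy ihx ihy =>
      intro d hd
      classical
      have := MvPolynomial.support_mul x y hd
      rcases Finset.mem_add.mp this with ⟨a, ha, b, hb, rfl⟩
      exact add_mem (ihx a ha) (ihy b hb)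
  · intro hf
    rw [f.as_sum]
    apply sum_mem
    intro d hd
    have : (monomial d (coeff d f) : MvPolynomial (Fin 2) k)
        = (coeff d f) • monomial d 1 := by
      rw [smul_monomial, smul_eq_mul, mul_one]
    rw [this]
    exact Subalgebra.smul_mem _ (monomial_mem_R (hf d hd)) _

end ring

section ideal
variable {k : Type*} [Field k] {l m n : ℕ}

lemma monomial_mul_support_iff (e : Fin 2 →₀ ℕ) (q : MvPolynomial (Fin 2) k)
    (d : Fin 2 →₀ ℕ) :
    d ∈ ((monomial e 1 : MvPolynomial (Fin 2) k) * q).support ↔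
      ∃ d' ∈ q.support, d = e + d' := by
  rw [mem_support_iff, coeff_monomial_mul']
  split_ifs with h
  · rw [one_mul]
    constructor
    · intro hne
      exact ⟨d - e, mem_support_iff.mpr hne, (add_tsub_cancel_of_le h).symm⟩
    · rintro ⟨d', hd', rfl⟩
      rw [add_tsub_cancel_left]
      exact mem_support_iff.mp hd'
  · constructor
    · intro hne
      exact absurd rfl hne
    · rintro ⟨d', hd', rfl⟩
      exact absurd le_self_add h

lemma exists_div (f : MvPolynomial (Fin 2) k)
    (hf : ∀ d ∈ f.support, ∃ s ∈ SS l m n, d = mexp n 0 + s) :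
    ∃ q : MvPolynomial (Fin 2) k, (∀ d ∈ q.support, d ∈ SS l m n) ∧
      (monomial (mexp n 0) 1 : MvPolynomial (Fin 2) k) * q = f := by
  classical
  refine ⟨∑ d ∈ f.support, monomial (d - mexp n 0) (coeff d f), ?_, ?_⟩
  · intro d hd
    obtain ⟨d', hd', hmem⟩ := Finset.mem_biUnion.mp
      (Finset.mem_of_subset (MvPolynomial.support_sum) hd)
    have hde : d = d' - mexp n 0 := by
      have := support_monomial_subset hmem
      simpa using this
    obtain ⟨s, hs, hds⟩ := hf d' hd'
    rw [hde, hds, add_tsub_cancel_left]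
    exact hs
  · rw [Finset.mul_sum]
    conv_rhs => rw [f.as_sum]
    apply Finset.sum_congr rfl
    intro d hd
    obtain ⟨s, hs, hds⟩ := hf d hd
    rw [monomial_mul, one_mul]
    congr 1
    rw [hds, add_tsub_cancel_left]

end ideal

lemma quot_reg_iff {A : Type*} [CommRing A] (x y : A) :
    IsSMulRegular (QuotSMulTop x A) y ↔
      ∀ f : A, y * f ∈ x • (⊤ : Submodule A A) → f ∈ x • (⊤ : Submodule A A) := by
  constructor
  · intro hreg f hyf
    have h1 : y • (Submodule.Quotient.mk f : QuotSMulTop x A)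
        = y • (Submodule.Quotient.mk 0) := by
      rw [← Submodule.Quotient.mk_smul, ← Submodule.Quotient.mk_smul]
      rw [Submodule.Quotient.eq]
      simpa [smul_eq_mul] using hyf
    have h2 := hreg h1
    rw [Submodule.Quotient.eq] at h2
    simpa using h2
  · intro H a b hab
    obtain ⟨a', rfl⟩ := Submodule.Quotient.mk_surjective _ a
    obtain ⟨b', rfl⟩ := Submodule.Quotient.mk_surjective _ b
    have hab' : (Submodule.Quotient.mk (y • a') : QuotSMulTop x A)
        = Submodule.Quotient.mk (y • b') := by
      rw [Submodule.Quotient.mk_smul, Submodule.Quotient.mk_smul]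
      exact hab
    rw [Submodule.Quotient.eq] at hab'
    rw [Submodule.Quotient.eq]
    have h3 : y • a' - y • b' = y * (a' - b') := by
      rw [smul_eq_mul, smul_eq_mul, mul_sub]
    rw [h3] at hab'
    exact H _ hab'

/-- Let `0 < ℓ < m < n` and `R = k[x^n, x^{n-ℓ}y^ℓ, x^{n-m}y^m, y^n]`.  Let `b₂` be the
smallest positive integer such that there exist `0 ≤ a₂ < n/gcd(ℓ,n)` and `c₂ > 0` with
`b₂m = a₂ℓ + c₂n`.  Then `R` is Cohen–Macaulay (equivalently `x^n, y^n` is a regular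
sequence on `R`) if and only if `b₂ ≥ a₂ + c₂`. -/
theorem stmt_17 (k : Type*) [Field k] (l m n : ℕ) (hl : 0 < l) (hlm : l < m) (hmn : m < n)
    (a2 b2 c2 : ℕ)
    (hb2pos : 0 < b2) (ha2lt : a2 < n / Nat.gcd l n) (hc2pos : 0 < c2)
    (hrel2 : b2 * m = a2 * l + c2 * n)
    (hmin2 : ∀ b' : ℕ, 0 < b' →
      (∃ a' c' : ℕ, a' < n / Nat.gcd l n ∧ 0 < c' ∧ b' * m = a' * l + c' * n) → b2 ≤ b')
    (R : Subalgebra k (MvPolynomial (Fin 2) k))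
    (hR : R = Algebra.adjoin k
      ({X 0 ^ n, X 0 ^ (n - l) * X 1 ^ l, X 0 ^ (n - m) * X 1 ^ m, X 1 ^ n} :
        Set (MvPolynomial (Fin 2) k)))
    (xn yn : R)
    (hxn : (xn : MvPolynomial (Fin 2) k) = X 0 ^ n)
    (hyn : (yn : MvPolynomial (Fin 2) k) = X 1 ^ n) :
    RingTheory.Sequence.IsRegular R [xn, yn] ↔ a2 + c2 ≤ b2 := by
  classical
  have hln : l < n := lt_trans hlm hmn
  have hn : 0 < n := by omega
  -- membership in R
  have hmemR : ∀ f : MvPolynomial (Fin 2) k,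
      f ∈ R ↔ ∀ d ∈ f.support, d ∈ SS l m n := by
    intro f; rw [hR]; exact mem_R_iff hl hlm hmn f
  -- xn coerces to the monomial
  have hxnm : (xn : MvPolynomial (Fin 2) k) = monomial (mexp n 0) 1 := by
    rw [hxn, gen0]
  have hynm : (yn : MvPolynomial (Fin 2) k) = monomial (mexp 0 n) 1 := by
    rw [hyn, gen3]
  -- membership in the ideal xn • ⊤
  have hmemI0 : ∀ z : R, z ∈ xn • (⊤ : Submodule R R) ↔ ∃ g : R, xn * g = z := by
    intro z
    constructor
    · intro hz
      have hz' : (z : R) ∈ xn • ((⊤ : Submodule R R) : Set R) := by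
        rw [← Submodule.coe_pointwise_smul]; exact hz
      obtain ⟨y, -, hy⟩ := Set.mem_smul_set.mp hz'
      exact ⟨y, hy⟩
    · rintro ⟨g, rfl⟩
      exact Submodule.smul_mem_pointwise_smul g xn ⊤ trivial
  have hmemI : ∀ f : R, f ∈ xn • (⊤ : Submodule R R) ↔
      ∀ d ∈ (f : MvPolynomial (Fin 2) k).support, ∃ s ∈ SS l m n, d = mexp n 0 + s := by
    intro f
    rw [hmemI0]
    constructor
    · rintro ⟨g, hg⟩ d hd
      have hgc : ((xn * g : R) : MvPolynomial (Fin 2) k)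
          = monomial (mexp n 0) 1 * (g : MvPolynomial (Fin 2) k) := by
        push_cast [hxnm]
        rfl
      rw [← hg, hgc, monomial_mul_support_iff] at hd
      obtain ⟨d', hd', rfl⟩ := hd
      exact ⟨d', (hmemR g).mp g.2 d' hd', rfl⟩
    · intro hsupp
      obtain ⟨q, hq, hmul⟩ := exists_div (l := l) (m := m) (f : MvPolynomial (Fin 2) k) hsupp
      refine ⟨⟨q, (hmemR q).mpr hq⟩, ?_⟩
      apply Subtype.ext
      push_cast [hxnm]
      exact hmul
  -- xn is regular on R
  have hxreg : IsSMulRegular R xn := by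
    intro a b hab
    have h1 : (xn : MvPolynomial (Fin 2) k) * a = (xn : MvPolynomial (Fin 2) k) * b := by
      have := congrArg (fun z : R => (z : MvPolynomial (Fin 2) k)) hab
      simpa [smul_eq_mul] using this
    rw [hxn] at h1
    have h2 : (a : MvPolynomial (Fin 2) k) = b :=
      mul_left_cancel₀ (pow_ne_zero _ (X_ne_zero (0 : Fin 2))) h1
    exact Subtype.ext h2
  -- the ideal (xn, yn) is proper
  have htop : (⊤ : Submodule R R) ≠ Ideal.ofList [xn, yn] • ⊤ := by
    intro h
    have h1 : (1 : R) ∈ Ideal.ofList [xn, yn] • (⊤ : Submodule R R) := by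
      rw [← h]; trivial
    have hcc : ∀ z : R, z ∈ Ideal.ofList [xn, yn] • (⊤ : Submodule R R) →
        constantCoeff (z : MvPolynomial (Fin 2) k) = 0 := by
      intro z hz
      refine Submodule.smul_induction_on hz ?_ ?_
      · intro r hr w _
        have hr0 : constantCoeff (r : MvPolynomial (Fin 2) k) = 0 := by
          refine Submodule.span_induction ?_ ?_ ?_ ?_ hr
          · intro u hu
            simp only [List.mem_cons, List.not_mem_nil, or_false, Set.mem_setOf_eq,
              List.mem_singleton] at hu
            rcases hu with rfl | rfl
            · rw [hxn]; simp [zero_pow (by omega : n ≠ 0)]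
            · rw [hyn]; simp [zero_pow (by omega : n ≠ 0)]
          · simp
          · intro u v _ _ hu hv
            push_cast
            rw [map_add, hu, hv, add_zero]
          · intro c u _ hu
            have : ((c • u : R) : MvPolynomial (Fin 2) k)
                = (c : MvPolynomial (Fin 2) k) * u := by
              push_cast [smul_eq_mul]
              rfl
            rw [this, map_mul, hu, mul_zero]
        have : ((r • w : R) : MvPolynomial (Fin 2) k)
            = (r : MvPolynomial (Fin 2) k) * w := by
          push_cast [smul_eq_mul]
          rfl
        rw [this, map_mul, hr0, zero_mul]
      · intro u v hu hv
        push_cast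
        rw [map_add, hu, hv, add_zero]
    have := hcc 1 h1
    simp at this
  -- regularity of yn on R/(xn) is equivalent to an ideal condition
  have hQreg := quot_reg_iff (A := R) xn yn
  -- quotient regularity is equivalent to the combinatorial condition
  have hcomb : (∀ f : R, yn * f ∈ xn • (⊤ : Submodule R R) →
      f ∈ xn • (⊤ : Submodule R R)) ↔
      (∀ d ∈ SS l m n, (∃ s ∈ SS l m n, mexp 0 n + d = mexp n 0 + s) →
        (∃ s ∈ SS l m n, d = mexp n 0 + s)) := by
    constructor
    · intro H d hd hshift
      set f : R := ⟨monomial d 1, (hmemR _).mpr (by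
        intro d' hd'
        rw [support_monomial, if_neg (one_ne_zero)] at hd'
        simp only [Finset.mem_singleton] at hd'
        subst hd'
        exact hd)⟩ with hf
      have hyfc : ((yn * f : R) : MvPolynomial (Fin 2) k)
          = monomial (mexp 0 n + d) 1 := by
        push_cast [hynm, hf]
        rw [monomial_mul, one_mul]
      have hyf : yn * f ∈ xn • (⊤ : Submodule R R) := by
        rw [hmemI]
        intro d' hd'
        rw [hyfc, support_monomial, if_neg (one_ne_zero)] at hd'
        simp only [Finset.mem_singleton] at hd'
        subst hd'
        exact hshift
      have := (hmemI f).mp (H f hyf) d (by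
        rw [hf]
        simp only []
        rw [support_monomial, if_neg (one_ne_zero)]
        exact Finset.mem_singleton_self d)
      exact this
    · intro H f hyf
      rw [hmemI] at hyf ⊢
      intro d hd
      have hdS : d ∈ SS l m n := (hmemR _).mp f.2 d hd
      have hshift : ∃ s ∈ SS l m n, mexp 0 n + d = mexp n 0 + s := by
        apply hyf
        have hyfc : ((yn * f : R) : MvPolynomial (Fin 2) k)
            = monomial (mexp 0 n) 1 * (f : MvPolynomial (Fin 2) k) := by
          push_cast [hynm]
          rfl
        rw [hyfc, monomial_mul_support_iff]
        exact ⟨d, hd, rfl⟩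
      exact H d hdS hshift
  -- the combinatorial condition is equivalent to a2 + c2 ≤ b2
  have hfinal : (∀ d ∈ SS l m n, (∃ s ∈ SS l m n, mexp 0 n + d = mexp n 0 + s) →
      (∃ s ∈ SS l m n, d = mexp n 0 + s)) ↔ a2 + c2 ≤ b2 := by
    constructor
    · -- if regular then a2 + c2 ≤ b2, by contradiction using the witness
      intro H
      by_contra hcon
      push_neg at hcon
      set x := a2 * (n - l) with hxdef
      set y := a2 * l + (c2 - 1) * n with hydef
      have hxy : x + y = n * (a2 + (c2 - 1)) := by
        have h1 : a2 * (n - l) + a2 * l = a2 * n := by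
          rw [← Nat.mul_add]; congr 1; omega
        calc x + y = (a2 * (n - l) + a2 * l) + (c2 - 1) * n := by rw [hxdef, hydef]; ring
          _ = a2 * n + (c2 - 1) * n := by rw [h1]
          _ = n * (a2 + (c2 - 1)) := by ring
      have hdS : mexp x y ∈ SS l m n := by
        rw [mem_SS_coord hl hlm hmn]
        refine ⟨⟨a2 + (c2 - 1), hxy⟩, a2, 0, c2 - 1, by rw [hydef]; ring, ?_⟩
        rw [hxy, Nat.mul_div_cancel_left _ hn]
        omega
      have hshift : ∃ s ∈ SS l m n, mexp 0 n + mexp x y = mexp n 0 + s := by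
        have he : mexp 0 n + mexp x y = mexp x (n + y) := by
          rw [mexp_add, Nat.zero_add]
        rw [he, mem_shift_coord hl hlm hmn]
        have hxy2 : x + (n + y) = n * (a2 + c2) := by
          rw [Nat.add_left_comm, hxy]
          have : a2 + c2 = (a2 + (c2 - 1)) + 1 := by omega
          rw [this]; ring
        refine ⟨⟨a2 + c2, hxy2⟩, 0, b2, 0, ?_, ?_⟩
        · have hnc : (c2 - 1) * n + n = c2 * n := by
            have h2 : c2 - 1 + 1 = c2 := by omega
            calc (c2 - 1) * n + n = ((c2 - 1) + 1) * n := by ring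
              _ = c2 * n := by rw [h2]
          have : n + y = a2 * l + c2 * n := by
            rw [hydef, ← hnc]; ring
          rw [this, ← hrel2]; ring
        · rw [hxy2, Nat.mul_div_cancel_left _ hn]
          omega
      obtain ⟨s, hs, heq⟩ := H (mexp x y) hdS hshift
      have := (mem_shift_coord hl hlm hmn (x := x) (y := y)).mp ⟨s, hs, heq⟩
      obtain ⟨-, β, γ, δ, hrep, hw⟩ := this
      rw [hxy, Nat.mul_div_cancel_left _ hn] at hw
      exact keyB hl hlm hmn ha2lt hc2pos hrel2 hmin2
        ⟨β, γ, δ, hrep.symm, by omega⟩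
    · -- if a2 + c2 ≤ b2 then regular, via keyA
      intro hcm d hd hshift
      rw [← mexp_eq_self d] at hd hshift ⊢
      set x := d 0
      set y := d 1
      rw [mem_SS_coord hl hlm hmn] at hd
      obtain ⟨⟨T, hT⟩, β, γ, δ, hrep, hw⟩ := hd
      rw [hT, Nat.mul_div_cancel_left _ hn] at hw
      have he : mexp 0 n + mexp x y = mexp x (n + y) := by
        rw [mexp_add, Nat.zero_add]
      rw [he, mem_shift_coord hl hlm hmn] at hshift
      obtain ⟨-, β', γ', δ', hrep', hw'⟩ := hshift
      have hxny : x + (n + y) = n * (T + 1) := by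
        rw [Nat.add_left_comm, hT]; ring
      rw [hxny, Nat.mul_div_cancel_left _ hn] at hw'
      have hE : β * l + γ * m + δ * n + n = β' * l + γ' * m + δ' * n := by
        rw [← hrep]
        rw [Nat.add_comm n y] at hrep'
        omega
      obtain ⟨B, C, D, hBCD, hWt⟩ := keyA hl hlm hmn hc2pos hrel2 hmin2 hcm β γ δ β' γ' δ' hE
      rw [mem_shift_coord hl hlm hmn]
      refine ⟨⟨T, hT⟩, B, C, D, by rw [hBCD, ← hrep], ?_⟩
      rw [hT, Nat.mul_div_cancel_left _ hn]
      omega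
  -- assemble
  rw [RingTheory.Sequence.isRegular_iff,
    RingTheory.Sequence.isWeaklyRegular_cons_iff,
    RingTheory.Sequence.isWeaklyRegular_singleton_iff]
  rw [hQreg, hcomb, hfinal]
  constructor
  · rintro ⟨⟨-, h⟩, -⟩
    exact h
  · intro h
    exact ⟨⟨hxreg, h⟩, htop⟩
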